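/- For the Fourier transform on ℝ with kernel e^{-2πixy} and for 0 < Re(s) < 1, the tempered distribution |x|^{s-1} has Fourier transform γ₊(s)·|y|^{-s}, where γ₊(s) = π^(1/2-s)·Γ(s/2)/Γ((1-s)/2). Concretely: for every Schwartz function α on ℝ, ∫_ℝ 𝓕α(y)·|y|^{s-1} dy = γ₊(s)·∫_ℝ α(x)·|x|^{-s} dx. -/

import Mathlib

open Real Complex MeasureTheory

open Set FourierTransform Filter

lemma aux_arg {r : ℝ} (hr : 0 ≤ r) : (r:ℂ).arg ≠ π := by
  rw [Complex.arg_ofReal_of_nonneg hr]; exact Real.pi_ne_zero.symm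

lemma aux_one_div_cpow {r : ℝ} (hr : 0 < r) (w : ℂ) : (1 / (r:ℂ)) ^ w = (r:ℂ) ^ (-w) := by
  rw [one_div, Complex.inv_cpow _ _ (aux_arg hr.le), ← Complex.cpow_neg]

lemma aux_cpow_two_mul {x : ℝ} (hx : 0 < x) (c : ℂ) :
    ((x:ℂ)) ^ (2 * c) = ((x^2 : ℝ):ℂ) ^ c := by
  rw [Complex.cpow_mul]
  · norm_cast
  · simp [Complex.mul_im, Complex.log_im, Complex.arg_ofReal_of_nonneg hx.le, Real.pi_pos]
  · simp [Complex.mul_im, Complex.log_im, Complex.arg_ofReal_of_nonneg hx.le, Real.pi_pos.le]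

lemma aux_sq_cpow {y : ℝ} (hy : y ≠ 0) (c : ℂ) :
    ((π * y^2 : ℝ):ℂ) ^ c = (π:ℂ)^c * ((|y| : ℝ):ℂ) ^ (2*c) := by
  have h1 : ((π * y^2 : ℝ):ℂ) = (π:ℂ) * ((y^2:ℝ):ℂ) := by push_cast; ring
  rw [h1, Complex.mul_cpow_ofReal_nonneg Real.pi_pos.le (sq_nonneg y)]
  congr 1
  rw [aux_cpow_two_mul (abs_pos.mpr hy), _root_.sq_abs]

lemma gamma_rep_inv {b : ℂ} (hb : 0 < b.re) {r : ℝ} (hr : 0 < r) :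
    ∫ t : ℝ in Ioi 0, (t:ℂ) ^ (-b - 1) * Complex.exp (-(r * (t:ℂ)⁻¹)) =
      (r:ℂ) ^ (-b) * Complex.Gamma b := by
  have h := integral_comp_rpow_Ioi (fun t : ℝ ↦ (t:ℂ) ^ (-b - 1) * Complex.exp (-(r * (t:ℂ)⁻¹)))
    (p := -1) (by norm_num)
  rw [← aux_one_div_cpow hr b, ← Complex.integral_cpow_mul_exp_neg_mul_Ioi hb hr, ← h]
  apply setIntegral_congr_fun measurableSet_Ioi
  intro x hx
  rw [mem_Ioi] at hx
  have hx0 : (x:ℂ) ≠ 0 := Complex.ofReal_ne_zero.mpr hx.ne'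
  simp only [abs_neg, abs_one, one_mul, smul_eq_mul, Real.rpow_neg_one]
  rw [Complex.ofReal_inv, inv_inv]
  have h3 : ((x:ℂ)⁻¹) ^ (-b - 1) = (x:ℂ) ^ (b + 1) := by
    rw [Complex.inv_cpow _ _ (aux_arg hx.le), ← Complex.cpow_neg]
    norm_num
    rw [add_comm]
  have h6 : ((x ^ ((-1:ℝ) - 1) : ℝ) : ℂ) = (x:ℂ) ^ (-2 : ℂ) := by
    rw [Complex.ofReal_cpow hx.le]; norm_num
  rw [h3, Complex.real_smul, h6, ← mul_assoc, ← Complex.cpow_add _ _ hx0]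
  have h7 : (-2 : ℂ) + (b + 1) = b - 1 := by ring
  rw [h7]

lemma parseval_mul (f g : ℝ → ℂ) (hf : Integrable f) (hg : Integrable g) :
    ∫ y : ℝ, 𝓕 f y * g y = ∫ x : ℝ, f x * 𝓕 g x := by
  have := VectorFourier.integral_fourierIntegral_smul_eq_flip (μ := (volume : Measure ℝ))
    (ν := (volume : Measure ℝ)) (L := innerₗ ℝ) (f := f) (g := g)
    Real.continuous_fourierChar (by exact continuous_fst.inner continuous_snd) hf hg
  simpa [flip_innerₗ, smul_eq_mul, Real.fourier_eq, VectorFourier.fourierIntegral] using this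

-- the statement's inner integral is the Fourier transform
lemma inner_integral_eq (α : SchwartzMap ℝ ℂ) (y : ℝ) :
    (∫ x : ℝ, α x * Complex.exp (-(2 * π * Complex.I * x * y))) = 𝓕 (⇑α) y := by
  rw [Real.fourier_eq']
  congr 1
  ext x
  rw [smul_eq_mul, mul_comm]
  congr 2
  push_cast [RCLike.inner_apply, conj_trivial]
  ring

lemma integrableOn_min_bound {c₁ c₂ : ℝ} (h₁ : -1 < c₁) (h₂ : c₂ < -1) (M : ℝ)
    (f : ℝ → ℝ) (hf : AEStronglyMeasurable f (volume.restrict (Ioi 0)))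
    (hbd : ∀ t ∈ Ioi (0:ℝ), ‖f t‖ ≤ min (M * t ^ c₁) (M * t ^ c₂)) :
    IntegrableOn f (Ioi 0) := by
  have hsplit : Ioi (0:ℝ) = Ioc 0 1 ∪ Ioi 1 := (Ioc_union_Ioi_eq_Ioi zero_le_one).symm
  rw [hsplit]
  apply IntegrableOn.union
  · have hint : IntegrableOn (fun t : ℝ ↦ M * t ^ c₁) (Ioc 0 1) := by
      have := (intervalIntegral.intervalIntegrable_rpow' (a := 0) (b := 1) h₁)
      rw [intervalIntegrable_iff_integrableOn_Ioc_of_le zero_le_one] at this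
      exact this.const_mul M
    apply Integrable.mono' hint
      (hf.mono_measure (Measure.restrict_mono Ioc_subset_Ioi_self le_rfl))
    refine (ae_restrict_iff' measurableSet_Ioc).mpr (ae_of_all _ fun t ht => ?_)
    exact (hbd t (Ioc_subset_Ioi_self ht)).trans (min_le_left _ _)
  · have hint : IntegrableOn (fun t : ℝ ↦ M * t ^ c₂) (Ioi 1) :=
      (integrableOn_Ioi_rpow_of_lt h₂ zero_lt_one).const_mul M
    apply Integrable.mono' hint
      (hf.mono_measure (Measure.restrict_mono (Ioi_subset_Ioi zero_le_one) le_rfl))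
    refine (ae_restrict_iff' measurableSet_Ioi).mpr (ae_of_all _ fun t ht => ?_)
    exact (hbd t (Ioi_subset_Ioi zero_le_one ht)).trans (min_le_right _ _)

lemma integrable_prod_kernel (F : ℝ × ℝ → ℂ)
    (hm : AEStronglyMeasurable F ((volume.restrict (Ioi 0)).prod volume))
    (hslice : ∀ t ∈ Ioi (0:ℝ), Integrable (fun y ↦ F (t, y)))
    (g : SchwartzMap ℝ ℂ) (φ ψ : ℝ → ℝ)
    (hψ : ∀ t ∈ Ioi (0:ℝ), 0 < ψ t) (hφ : ∀ t ∈ Ioi (0:ℝ), 0 ≤ φ t)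
    (hnorm : ∀ t ∈ Ioi (0:ℝ), ∀ y, ‖F (t, y)‖ = φ t * rexp (-(ψ t) * y^2) * ‖g y‖)
    (c₁ c₂ : ℝ) (h₁ : -1 < c₁) (h₂ : c₂ < -1)
    (hbd : ∀ t ∈ Ioi (0:ℝ),
      (φ t ≤ t ^ c₁ ∧ φ t * Real.sqrt (1 / ψ t) ≤ t ^ c₂) ∨
      (φ t * Real.sqrt (1 / ψ t) ≤ t ^ c₁ ∧ φ t ≤ t ^ c₂)) :
    Integrable F ((volume.restrict (Ioi 0)).prod volume) := by
  rw [integrable_prod_iff hm]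
  constructor
  · exact (ae_restrict_iff' measurableSet_Ioi).mpr (ae_of_all _ hslice)
  · set I1 : ℝ := ∫ y : ℝ, ‖g y‖ with hI1
    set C : ℝ := SchwartzMap.seminorm ℝ 0 0 g with hC
    have hI1nn : 0 ≤ I1 := integral_nonneg fun y ↦ norm_nonneg _
    have hCnn : 0 ≤ C := apply_nonneg _ _
    have hgC : ∀ y : ℝ, ‖g y‖ ≤ C := fun y ↦ g.norm_le_seminorm ℝ y
    set M : ℝ := I1 + Real.sqrt π * C with hM
    have hI1M : I1 ≤ M := le_add_of_nonneg_right (by positivity)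
    have hsqM : Real.sqrt π * C ≤ M := le_add_of_nonneg_left hI1nn
    apply integrableOn_min_bound h₁ h₂ M _ (hm.norm.integral_prod_right')
    intro t ht
    have hψt := hψ t ht
    have hφt := hφ t ht
    -- compute/bound the inner integral
    have key1 : ∫ y : ℝ, ‖F (t, y)‖ ≤ φ t * I1 := by
      rw [← integral_const_mul]
      apply integral_mono_of_nonneg (ae_of_all _ fun y ↦ norm_nonneg _)
        (g.integrable.norm.const_mul (φ t)) (ae_of_all _ fun y ↦ ?_)
      simp only []
      rw [hnorm t ht y]
      have : rexp (-(ψ t) * y^2) ≤ 1 := by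
        apply Real.exp_le_one_iff.mpr
        nlinarith [sq_nonneg y, hψt]
      exact mul_le_mul_of_nonneg_right (mul_le_of_le_one_right hφt this) (norm_nonneg _)
    have key2 : ∫ y : ℝ, ‖F (t, y)‖ ≤ φ t * (Real.sqrt π * C) * Real.sqrt (1 / ψ t) := by
      have hgauss : ∫ y : ℝ, rexp (-(ψ t) * y^2) = Real.sqrt (π / ψ t) := integral_gaussian (ψ t)
      have : ∫ y : ℝ, ‖F (t, y)‖ ≤ ∫ y : ℝ, (φ t * C) * rexp (-(ψ t) * y^2) := by
        apply integral_mono_of_nonneg (ae_of_all _ fun y ↦ norm_nonneg _)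
          (((integrable_exp_neg_mul_sq hψt).const_mul _)) (ae_of_all _ fun y ↦ ?_)
        simp only []
        rw [hnorm t ht y]
        have h := hgC y
        nlinarith [mul_le_mul_of_nonneg_left h (mul_nonneg hφt (Real.exp_pos (-(ψ t) * y^2)).le)]
      rw [integral_const_mul, hgauss] at this
      apply this.trans
      rw [show π / ψ t = π * (1 / ψ t) by ring, Real.sqrt_mul Real.pi_pos.le]
      ring_nf
      exact le_refl _
    have hnnint : 0 ≤ ∫ y : ℝ, ‖F (t, y)‖ := integral_nonneg fun y ↦ norm_nonneg _
    rw [Real.norm_of_nonneg hnnint, le_min_iff]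
    rcases hbd t ht with ⟨hb1, hb2⟩ | ⟨hb1, hb2⟩
    · constructor
      · exact key1.trans (by nlinarith [Real.rpow_pos_of_pos (mem_Ioi.mp ht) c₁, (Real.rpow_pos_of_pos (mem_Ioi.mp ht) c₁).le])
      · apply key2.trans
        calc φ t * (Real.sqrt π * C) * Real.sqrt (1 / ψ t)
            = (Real.sqrt π * C) * (φ t * Real.sqrt (1 / ψ t)) := by ring
          _ ≤ M * t ^ c₂ := by
              apply mul_le_mul hsqM hb2 (by positivity) (by positivity)
    · constructor
      · apply key2.trans
        calc φ t * (Real.sqrt π * C) * Real.sqrt (1 / ψ t)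
            = (Real.sqrt π * C) * (φ t * Real.sqrt (1 / ψ t)) := by ring
          _ ≤ M * t ^ c₁ := mul_le_mul hsqM hb1 (by positivity) (by positivity)
      · exact key1.trans (by nlinarith [Real.rpow_pos_of_pos (mem_Ioi.mp ht) c₂, (Real.rpow_pos_of_pos (mem_Ioi.mp ht) c₂).le])

lemma aesm_of_continuousOn (F : ℝ × ℝ → ℂ) (h : ContinuousOn F (Ioi 0 ×ˢ univ)) :
    AEStronglyMeasurable F ((volume.restrict (Ioi 0)).prod volume) := by
  have heq : (volume.restrict (Ioi 0)).prod (volume : Measure ℝ) =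
      ((volume : Measure ℝ).prod volume).restrict (Ioi 0 ×ˢ univ) := by
    rw [← Measure.prod_restrict, Measure.restrict_univ]
  rw [heq]
  exact h.aestronglyMeasurable (measurableSet_Ioi.prod MeasurableSet.univ)

lemma contOn_cpow (a : ℂ) : ContinuousOn (fun p : ℝ × ℝ ↦ ((p.1:ℝ):ℂ) ^ a) (Ioi 0 ×ˢ univ) := by
  intro p hp
  have hp1 : 0 < p.1 := (mem_prod.mp hp).1
  have h1 : ContinuousAt (fun t : ℝ ↦ ((t:ℝ):ℂ) ^ a) p.1 := by
    exact (continuousAt_cpow_const (Complex.ofReal_mem_slitPlane.mpr hp1)).comp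
      Complex.continuous_ofReal.continuousAt
  exact ((h1.comp continuous_fst.continuousAt)).continuousWithinAt

lemma sqrt_one_div_pi_mul_le {u : ℝ} (hu : 0 < u) :
    Real.sqrt (1 / (π * u)) ≤ u ^ (-(1/2) : ℝ) := by
  have h1 : (1 : ℝ) / (π * u) ≤ 1 / u := by
    apply one_div_le_one_div_of_le hu
    nlinarith [Real.pi_gt_three]
  refine (Real.sqrt_le_sqrt h1).trans ?_
  rw [Real.sqrt_eq_rpow, one_div, ← Real.rpow_neg_one u, ← Real.rpow_mul hu.le]
  norm_num

set_option maxHeartbeats 1000000 in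
lemma integrable_case1 {w : ℂ} (hw0 : 0 < w.re) (hw1 : w.re < 1/2) (g : SchwartzMap ℝ ℂ) :
    Integrable (fun p : ℝ × ℝ ↦
        ((p.1:ℝ):ℂ) ^ (w - 1) * Complex.exp (-((π * p.2 ^ 2 : ℝ) * (p.1:ℝ))) * g p.2)
      ((volume.restrict (Ioi 0)).prod volume) := by
  have habs : ∀ t ∈ Ioi (0:ℝ), ∀ y : ℝ,
      ‖((t:ℝ):ℂ) ^ (w - 1) * Complex.exp (-((π * y ^ 2 : ℝ) * (t:ℝ))) * g y‖
        = t ^ (w.re - 1) * rexp (-(π * t) * y ^ 2) * ‖g y‖ := by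
    intro t ht y
    rw [norm_mul, norm_mul]
    congr 2
    · rw [Complex.norm_cpow_eq_rpow_re_of_pos (mem_Ioi.mp ht)]
      norm_num [Complex.sub_re]
    · rw [Complex.norm_exp]
      have h5 : (-(((π * y ^ 2 : ℝ):ℂ) * ((t:ℝ):ℂ))) = (((-(π * t) * y ^ 2 : ℝ)):ℂ) := by
        push_cast; ring
      rw [h5, Complex.ofReal_re]
  have hm : AEStronglyMeasurable (fun p : ℝ × ℝ ↦
      ((p.1:ℝ):ℂ) ^ (w - 1) * Complex.exp (-((π * p.2 ^ 2 : ℝ) * (p.1:ℝ))) * g p.2)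
      ((volume.restrict (Ioi 0)).prod volume) := by
    apply aesm_of_continuousOn
    exact ((contOn_cpow (w - 1)).mul (Continuous.continuousOn (by fun_prop))).mul
      (Continuous.continuousOn (g.continuous.comp continuous_snd))
  have hslice : ∀ t ∈ Ioi (0:ℝ), Integrable (fun y : ℝ ↦
      ((t:ℝ):ℂ) ^ (w - 1) * Complex.exp (-((π * y ^ 2 : ℝ) * (t:ℝ))) * g y) := by
    intro t ht
    apply Integrable.bdd_mul (c := ‖((t:ℝ):ℂ) ^ (w - 1)‖) g.integrable
    · apply Continuous.aestronglyMeasurable; fun_prop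
    · filter_upwards with y
      rw [norm_mul]
      have h6 : ‖Complex.exp (-((π * y ^ 2 : ℝ) * (t:ℝ)))‖ ≤ 1 := by
        rw [Complex.norm_exp, Real.exp_le_one_iff]
        simp only [Complex.neg_re, Complex.mul_re, Complex.ofReal_re, Complex.ofReal_im]
        nlinarith [mul_nonneg (mul_nonneg Real.pi_pos.le (sq_nonneg y)) (le_of_lt (mem_Ioi.mp ht))]
      nlinarith [norm_nonneg (((t:ℝ):ℂ) ^ (w - 1))]
  have hbd : ∀ t ∈ Ioi (0:ℝ),
      ((fun t : ℝ ↦ t ^ (w.re - 1)) t ≤ t ^ (w.re - 1) ∧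
        (fun t : ℝ ↦ t ^ (w.re - 1)) t * Real.sqrt (1 / ((fun t : ℝ ↦ π * t) t)) ≤
          t ^ (w.re - 3/2)) ∨
      ((fun t : ℝ ↦ t ^ (w.re - 1)) t * Real.sqrt (1 / ((fun t : ℝ ↦ π * t) t)) ≤
          t ^ (w.re - 1) ∧ (fun t : ℝ ↦ t ^ (w.re - 1)) t ≤ t ^ (w.re - 3/2)) := by
    intro t ht
    left
    refine ⟨le_refl _, ?_⟩
    have h1 := sqrt_one_div_pi_mul_le (mem_Ioi.mp ht)
    have h2 : (0:ℝ) ≤ t ^ (w.re - 1) := Real.rpow_nonneg (mem_Ioi.mp ht).le _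
    calc t ^ (w.re - 1) * Real.sqrt (1 / (π * t))
        ≤ t ^ (w.re - 1) * t ^ (-(1/2) : ℝ) := mul_le_mul_of_nonneg_left h1 h2
      _ = t ^ (w.re - 3/2) := by
          rw [← Real.rpow_add (mem_Ioi.mp ht)]; congr 1; ring
  exact integrable_prod_kernel _ hm hslice g (fun t ↦ t ^ (w.re - 1)) (fun t ↦ π * t)
    (fun t ht ↦ mul_pos Real.pi_pos (mem_Ioi.mp ht))
    (fun t ht ↦ Real.rpow_nonneg (mem_Ioi.mp ht).le _)
    habs (w.re - 1) (w.re - 3/2) (by linarith) (by linarith) hbd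

set_option maxHeartbeats 1000000 in
lemma integrable_case2 {s : ℂ} (hs0 : 0 < s.re) (hs1 : s.re < 1) (g : SchwartzMap ℝ ℂ) :
    Integrable (fun p : ℝ × ℝ ↦
        ((p.1:ℝ):ℂ) ^ (-(s/2) - 1) * Complex.exp (-((π * p.2 ^ 2 : ℝ) * ((p.1:ℝ):ℂ)⁻¹)) * g p.2)
      ((volume.restrict (Ioi 0)).prod volume) := by
  have hre : (-(s/2) - 1 : ℂ).re = -s.re/2 - 1 := by
    simp [Complex.div_re, Complex.normSq]
    ring
  have habs : ∀ t ∈ Ioi (0:ℝ), ∀ y : ℝ,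
      ‖((t:ℝ):ℂ) ^ (-(s/2) - 1) * Complex.exp (-((π * y ^ 2 : ℝ) * ((t:ℝ):ℂ)⁻¹)) * g y‖
        = t ^ (-s.re/2 - 1) * rexp (-(π * t⁻¹) * y ^ 2) * ‖g y‖ := by
    intro t ht y
    rw [norm_mul, norm_mul]
    congr 2
    · rw [Complex.norm_cpow_eq_rpow_re_of_pos (mem_Ioi.mp ht), hre]
    · rw [Complex.norm_exp]
      have h5 : (-(((π * y ^ 2 : ℝ):ℂ) * ((t:ℝ):ℂ)⁻¹)) = (((-(π * t⁻¹) * y ^ 2 : ℝ)):ℂ) := by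
        push_cast; ring
      rw [h5, Complex.ofReal_re]
  have hinv : ContinuousOn (fun p : ℝ × ℝ ↦ ((p.1:ℝ):ℂ)⁻¹) (Ioi 0 ×ˢ univ) := by
    apply ContinuousOn.inv₀
    · exact (Complex.continuous_ofReal.comp continuous_fst).continuousOn
    · intro p hp
      exact Complex.ofReal_ne_zero.mpr (ne_of_gt (mem_prod.mp hp).1)
  have hm : AEStronglyMeasurable (fun p : ℝ × ℝ ↦
      ((p.1:ℝ):ℂ) ^ (-(s/2) - 1) * Complex.exp (-((π * p.2 ^ 2 : ℝ) * ((p.1:ℝ):ℂ)⁻¹)) * g p.2)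
      ((volume.restrict (Ioi 0)).prod volume) := by
    apply aesm_of_continuousOn
    have hexp : ContinuousOn
        (fun p : ℝ × ℝ ↦ Complex.exp (-(((π * p.2^2:ℝ):ℂ) * ((p.1:ℝ):ℂ)⁻¹))) (Ioi 0 ×ˢ univ) :=
      Complex.continuous_exp.comp_continuousOn
        ((((by fun_prop : Continuous fun p : ℝ×ℝ ↦ ((π * p.2^2:ℝ):ℂ)).continuousOn).mul hinv).neg)
    exact ((contOn_cpow (-(s/2) - 1)).mul hexp).mul
      (Continuous.continuousOn (g.continuous.comp continuous_snd))
  have hslice : ∀ t ∈ Ioi (0:ℝ), Integrable (fun y : ℝ ↦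
      ((t:ℝ):ℂ) ^ (-(s/2) - 1) * Complex.exp (-((π * y ^ 2 : ℝ) * ((t:ℝ):ℂ)⁻¹)) * g y) := by
    intro t ht
    apply Integrable.bdd_mul (c := ‖((t:ℝ):ℂ) ^ (-(s/2) - 1)‖) g.integrable
    · apply Continuous.aestronglyMeasurable; fun_prop
    · filter_upwards with y
      rw [norm_mul]
      have h6 : ‖Complex.exp (-((π * y ^ 2 : ℝ) * ((t:ℝ):ℂ)⁻¹))‖ ≤ 1 := by
        rw [Complex.norm_exp, Real.exp_le_one_iff]
        have h5 : (-(((π * y ^ 2 : ℝ):ℂ) * ((t:ℝ):ℂ)⁻¹)) = (((-(π * t⁻¹) * y ^ 2 : ℝ)):ℂ) := by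
          push_cast; ring
        rw [h5, Complex.ofReal_re]
        nlinarith [mul_nonneg (mul_nonneg Real.pi_pos.le
          (inv_pos.mpr (mem_Ioi.mp ht)).le) (sq_nonneg y)]
      nlinarith [norm_nonneg (((t:ℝ):ℂ) ^ (-(s/2) - 1))]
  have hbd : ∀ t ∈ Ioi (0:ℝ),
      ((fun t : ℝ ↦ t ^ (-s.re/2 - 1)) t ≤ t ^ (-s.re/2 - 1/2) ∧
        (fun t : ℝ ↦ t ^ (-s.re/2 - 1)) t * Real.sqrt (1 / ((fun t : ℝ ↦ π * t⁻¹) t)) ≤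
          t ^ (-s.re/2 - 1)) ∨
      ((fun t : ℝ ↦ t ^ (-s.re/2 - 1)) t * Real.sqrt (1 / ((fun t : ℝ ↦ π * t⁻¹) t)) ≤
          t ^ (-s.re/2 - 1/2) ∧ (fun t : ℝ ↦ t ^ (-s.re/2 - 1)) t ≤ t ^ (-s.re/2 - 1)) := by
    intro t ht
    right
    refine ⟨?_, le_refl _⟩
    have ht' := mem_Ioi.mp ht
    have h1 := sqrt_one_div_pi_mul_le (inv_pos.mpr ht')
    have h1' : (t⁻¹ : ℝ) ^ (-(1/2) : ℝ) = t ^ ((1/2) : ℝ) := by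
      rw [← Real.rpow_neg_one t, ← Real.rpow_mul ht'.le]
      norm_num
    rw [h1'] at h1
    have h2 : (0:ℝ) ≤ t ^ (-s.re/2 - 1) := Real.rpow_nonneg ht'.le _
    calc t ^ (-s.re/2 - 1) * Real.sqrt (1 / (π * t⁻¹))
        ≤ t ^ (-s.re/2 - 1) * t ^ ((1/2) : ℝ) := mul_le_mul_of_nonneg_left h1 h2
      _ = t ^ (-s.re/2 - 1/2) := by
          rw [← Real.rpow_add ht']; congr 1; ring
  exact integrable_prod_kernel _ hm hslice g (fun t ↦ t ^ (-s.re/2 - 1)) (fun t ↦ π * t⁻¹)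
    (fun t ht ↦ mul_pos Real.pi_pos (inv_pos.mpr (mem_Ioi.mp ht)))
    (fun t ht ↦ Real.rpow_nonneg (mem_Ioi.mp ht).le _)
    habs (-s.re/2 - 1/2) (-s.re/2 - 1) (by linarith) (by linarith) hbd

lemma re_half_sub (s : ℂ) : ((1 - s)/2 : ℂ).re = (1 - s.re)/2 := by
  simp [Complex.div_re, Complex.normSq]

lemma re_half (s : ℂ) : ((s/2) : ℂ).re = s.re/2 := by
  simp [Complex.div_re, Complex.normSq]

/-- The Tate Gamma function for the trivial character on `ℝ`. -/
noncomputable def gammaPlus (s : ℂ) : ℂ :=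
  (Real.pi : ℂ) ^ (1/2 - s) * Complex.Gamma (s/2) / Complex.Gamma ((1 - s)/2)

set_option maxHeartbeats 2000000 in
theorem fourier_abs_pow (s : ℂ) (hs0 : 0 < s.re) (hs1 : s.re < 1) (α : SchwartzMap ℝ ℂ) :
    ∫ y : ℝ, (∫ x : ℝ, α x * Complex.exp (-(2 * Real.pi * Complex.I * x * y))) *
        ((|y| : ℝ) : ℂ) ^ (s - 1) =
      gammaPlus s * ∫ x : ℝ, α x * ((|x| : ℝ) : ℂ) ^ (-s) := by
  set w : ℂ := (1 - s)/2 with hw_def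
  have hw0 : 0 < w.re := by rw [hw_def, re_half_sub]; linarith
  have hw1 : w.re < 1/2 := by rw [hw_def, re_half_sub]; linarith
  have hs2 : 0 < (s/2).re := by rw [re_half]; linarith
  have hπ : (π:ℂ) ≠ 0 := Complex.ofReal_ne_zero.mpr Real.pi_ne_zero
  have hπw : (π:ℂ) ^ w ≠ 0 := by
    intro h
    exact hπ (Complex.cpow_eq_zero_iff _ _ |>.mp h).1
  have hΓ : Complex.Gamma w ≠ 0 := Complex.Gamma_ne_zero_of_re_pos hw0
  set g : SchwartzMap ℝ ℂ := SchwartzMap.fourierTransformCLM ℂ α with hg_def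
  have hgF : 𝓕 (⇑α) = ⇑g := by rw [hg_def, SchwartzMap.fourierTransformCLM_apply]; rfl
  have h0 : ∀ᵐ y : ℝ, y ≠ 0 := by
    refine ae_iff.mpr ?_
    simp
  -- gamma representation for y ≠ 0
  have gamma_rep : ∀ {y : ℝ}, y ≠ 0 →
      (∫ t in Ioi (0:ℝ), (t:ℂ) ^ (w - 1) * Complex.exp (-((π * y^2 : ℝ) * (t:ℝ)))) =
        Complex.Gamma w * ((π:ℂ) ^ (-w) * ((|y| : ℝ):ℂ) ^ (s - 1)) := by
    intro y hy
    have hr : 0 < π * y^2 := by positivity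
    rw [Complex.integral_cpow_mul_exp_neg_mul_Ioi hw0 hr, aux_one_div_cpow hr, aux_sq_cpow hy]
    have h2 : 2 * (-w) = s - 1 := by rw [hw_def]; ring
    rw [h2]; ring
  -- step 0: rewrite the LHS with 𝓕 α
  rw [show (∫ y : ℝ, (∫ x : ℝ, α x * Complex.exp (-(2 * Real.pi * Complex.I * x * y))) *
        ((|y| : ℝ) : ℂ) ^ (s - 1)) = ∫ y : ℝ, g y * ((|y| : ℝ) : ℂ) ^ (s - 1) by
    congr 1; ext y; rw [inner_integral_eq α y, hgF]]
  -- step 1: replace the cpow by the Gamma integral (a.e.)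
  have step1 : ∫ y : ℝ, g y * ((|y| : ℝ) : ℂ) ^ (s - 1) =
      ∫ y : ℝ, (π:ℂ) ^ w / Complex.Gamma w *
        ∫ t in Ioi (0:ℝ), g y * ((t:ℂ) ^ (w - 1) * Complex.exp (-((π * y^2 : ℝ) * (t:ℝ)))) := by
    refine integral_congr_ae ?_
    filter_upwards [h0] with y hy
    rw [integral_const_mul, gamma_rep hy]
    rw [Complex.cpow_neg]
    field_simp
  rw [step1, integral_const_mul]
  -- step 2: swap the integrals
  have hswap1 : Integrable (Function.uncurry (fun (y : ℝ) (t : ℝ) ↦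
      g y * ((t:ℂ) ^ (w - 1) * Complex.exp (-((π * y^2 : ℝ) * (t:ℝ))))))
      (volume.prod (volume.restrict (Ioi 0))) := by
    have h1 := (integrable_case1 hw0 hw1 g).swap
    apply h1.congr
    refine ae_of_all _ fun p ↦ ?_
    simp only [Function.comp, Function.uncurry, Prod.fst_swap, Prod.snd_swap]
    ring
  rw [integral_integral_swap hswap1]
  -- step 3: inner computation via Parseval
  have step3 : ∀ t ∈ Ioi (0:ℝ),
      (∫ y : ℝ, g y * ((t:ℂ) ^ (w - 1) * Complex.exp (-((π * y^2 : ℝ) * (t:ℝ))))) =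
      ∫ x : ℝ, ((t:ℝ):ℂ) ^ (-(s/2) - 1) *
        Complex.exp (-((π * x ^ 2 : ℝ) * ((t:ℝ):ℂ)⁻¹)) * α x := by
    intro t ht
    have ht' : (0:ℝ) < t := mem_Ioi.mp ht
    have ht0 : ((t:ℝ):ℂ) ≠ 0 := Complex.ofReal_ne_zero.mpr ht'.ne'
    have htre : 0 < ((t:ℝ):ℂ).re := by simpa using ht'
    set G : ℝ → ℂ := fun x : ℝ ↦ Complex.exp (-(π:ℂ) * (t:ℝ) * (x:ℝ)^2) with hG_def
    have hGint : Integrable G := by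
      have hb : 0 < ((π:ℂ) * (t:ℝ)).re := by
        simpa using mul_pos Real.pi_pos ht'
      have := integrable_cexp_quadratic hb 0 0
      apply this.congr
      refine ae_of_all _ fun x ↦ ?_
      rw [hG_def]
      ring_nf
    have hGfour : 𝓕 G = fun ξ : ℝ ↦ 1 / ((t:ℝ):ℂ) ^ (1/2 : ℂ) *
        Complex.exp (-(π:ℂ) / (t:ℝ) * (ξ:ℝ)^2) := by
      have hb : 0 < ((t:ℝ):ℂ).re := htre
      exact fourier_gaussian_pi hb
    calc (∫ y : ℝ, g y * ((t:ℂ) ^ (w - 1) * Complex.exp (-((π * y^2 : ℝ) * (t:ℝ)))))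
        = (t:ℂ) ^ (w - 1) * ∫ y : ℝ, 𝓕 (⇑α) y * G y := by
          rw [← integral_const_mul]
          congr 1; ext y
          rw [hgF, hG_def]
          have : Complex.exp (-((π * y^2 : ℝ) * ((t:ℝ):ℂ))) =
              Complex.exp (-(π:ℂ) * (t:ℝ) * (y:ℝ)^2) := by
            congr 1; push_cast; ring
          rw [this]; ring
      _ = (t:ℂ) ^ (w - 1) * ∫ x : ℝ, α x * 𝓕 G x := by
          rw [parseval_mul (⇑α) G α.integrable hGint]
      _ = ∫ x : ℝ, ((t:ℝ):ℂ) ^ (-(s/2) - 1) *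
            Complex.exp (-((π * x ^ 2 : ℝ) * ((t:ℝ):ℂ)⁻¹)) * α x := by
          rw [← integral_const_mul]
          congr 1; ext x
          rw [hGfour]
          have hpow : (t:ℂ) ^ (w - 1) * (1 / ((t:ℝ):ℂ) ^ (1/2 : ℂ)) =
              ((t:ℝ):ℂ) ^ (-(s/2) - 1) := by
            rw [one_div, ← Complex.cpow_neg, ← Complex.cpow_add _ _ ht0]
            congr 1
            rw [hw_def]; ring
          have hexp2 : Complex.exp (-(π:ℂ) / (t:ℝ) * (x:ℝ)^2) =
              Complex.exp (-((π * x ^ 2 : ℝ) * ((t:ℝ):ℂ)⁻¹)) := by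
            congr 1; push_cast; ring
          calc (t:ℂ) ^ (w - 1) * (α x * (1 / ((t:ℝ):ℂ) ^ (1/2 : ℂ) *
                Complex.exp (-(π:ℂ) / (t:ℝ) * (x:ℝ)^2)))
              = ((t:ℂ) ^ (w - 1) * (1 / ((t:ℝ):ℂ) ^ (1/2 : ℂ))) *
                Complex.exp (-(π:ℂ) / (t:ℝ) * (x:ℝ)^2) * α x := by ring
            _ = ((t:ℝ):ℂ) ^ (-(s/2) - 1) *
                Complex.exp (-((π * x ^ 2 : ℝ) * ((t:ℝ):ℂ)⁻¹)) * α x := by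
                rw [hpow, hexp2]
  rw [setIntegral_congr_fun measurableSet_Ioi step3]
  -- step 4: swap back
  have hswap2 := integrable_case2 hs0 hs1 α
  rw [integral_integral_swap hswap2]
  -- step 5: inner t-integral via gamma_rep_inv
  have step5 : (∫ x : ℝ, ∫ t in Ioi (0:ℝ), ((t:ℝ):ℂ) ^ (-(s/2) - 1) *
        Complex.exp (-((π * x ^ 2 : ℝ) * ((t:ℝ):ℂ)⁻¹)) * α x) =
      ∫ x : ℝ, Complex.Gamma (s/2) * (π:ℂ) ^ (-(s/2)) * (α x * ((|x| : ℝ):ℂ) ^ (-s)) := by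
    refine integral_congr_ae ?_
    filter_upwards [h0] with x hx
    rw [integral_mul_const]
    have hr : 0 < π * x^2 := by positivity
    rw [gamma_rep_inv hs2 hr, aux_sq_cpow hx]
    have h2 : 2 * (-(s/2)) = -s := by ring
    rw [h2]
    ring
  rw [step5, integral_const_mul]
  -- final constant algebra
  have hcpow : (π:ℂ)^w * (π:ℂ)^(-(s/2)) = (π:ℂ)^(1/2 - s) := by
    rw [← Complex.cpow_add _ _ hπ]
    congr 1
    rw [hw_def]; ring
  simp only [gammaPlus]
  rw [← hw_def]
  field_simp
  have hcpow2 : (π:ℂ)^w * (π:ℂ)^(-s/2) = (π:ℂ)^((1 - 2*s)/2) := by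
    rw [← Complex.cpow_add _ _ hπ]
    congr 1
    rw [hw_def]; ring
  linear_combination (norm := ring_nf) Complex.Gamma (s/2) * (∫ a : ℝ, α a * ((|a| : ℝ):ℂ) ^ (-s)) * hcpow2
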